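/- Let M be a complete metric space that is geodesic and has the compact intersection property. Then for every pair of metric spaces Y ⊆ X with X compact (hence Y closed in X compact) and every Lipschitz map f : Y → M, there exists an extension F : X → M with the same Lipschitz constant as f. -/

import Mathlib

open Metric Set

/-- A metric space is geodesic if any two distinct points are joined by an isometric curve. -/
def IsGeodesicSpace (M : Type*) [MetricSpace M] : Prop :=
  ∀ x y : M, x ≠ y → ∃ α : ℝ → M, α 0 = x ∧ α (dist x y) = y ∧
    ∀ s ∈ Set.Icc (0 : ℝ) (dist x y), ∀ t ∈ Set.Icc (0 : ℝ) (dist x y),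
      dist (α s) (α t) = |s - t|

/-- Compact intersection property: any family of pairwise intersecting closed balls whose
set of centers is relatively compact has a common point. -/
def CompactIP (M : Type*) [MetricSpace M] : Prop :=
  ∀ (ι : Type) (c : ι → M) (r : ι → ℝ),
    (∀ i j, (closedBall (c i) (r i) ∩ closedBall (c j) (r j)).Nonempty) →
    IsCompact (closure (Set.range c)) →
    (⋂ i, closedBall (c i) (r i)).Nonempty

/-- In a geodesic space, two balls with `dist a b ≤ r + s` intersect. -/
lemma geodesic_midpoint {M : Type*} [MetricSpace M] (hgeo : IsGeodesicSpace M)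
    (a b : M) (r s : ℝ) (hr : 0 ≤ r) (hs : 0 ≤ s) (h : dist a b ≤ r + s) :
    ∃ z : M, dist a z ≤ r ∧ dist b z ≤ s := by
  by_cases hab : a = b
  · exact ⟨a, by simp [hr], by simp [hab.symm, hs]⟩
  · obtain ⟨α, h0, hd, hiso⟩ := hgeo a b hab
    set d := dist a b with hdd
    have hd0 : 0 ≤ d := dist_nonneg
    set t := min r d with ht
    have ht0 : 0 ≤ t := le_min hr hd0
    have htd : t ≤ d := min_le_right _ _
    refine ⟨α t, ?_, ?_⟩
    · have := hiso 0 ⟨le_refl _, hd0⟩ t ⟨ht0, htd⟩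
      rw [h0] at this
      rw [this, abs_of_nonpos (by linarith)]
      have := min_le_left r d
      linarith
    · have := hiso d ⟨hd0, le_refl _⟩ t ⟨ht0, htd⟩
      rw [hd] at this
      rw [this, abs_of_nonneg (by linarith)]
      rcases le_or_gt r d with hrd | hrd
      · have : t = r := min_eq_left hrd
        rw [this]; linarith
      · have : t = d := min_eq_right hrd.le
        rw [this]; linarith

/-- A sequence Lipschitz-dominated by a totally bounded sequence is totally bounded. -/
lemma tb_of_lip {X M : Type*} [MetricSpace X] [MetricSpace M] {L : ℝ} (hL : 0 ≤ L)
    (z : ℕ → X) (v : ℕ → M) (h : ∀ i j, dist (v i) (v j) ≤ L * dist (z i) (z j))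
    (hz : TotallyBounded (Set.range z)) : TotallyBounded (Set.range v) := by
  rw [Metric.totallyBounded_iff]
  intro ε hε
  have hL1 : (0:ℝ) < L + 1 := by linarith
  set δ := ε / (L + 1) with hδdef
  have hδ : 0 < δ := div_pos hε hL1
  obtain ⟨t, htsub, htfin, hcov⟩ :=
    (totallyBounded_iff_subset.mp hz) {p : X × X | dist p.1 p.2 < δ}
      (Metric.dist_mem_uniformity hδ)
  -- choose an index for each element of t
  classical
  set g : X → ℕ := fun y => if h : ∃ j, z j = y then h.choose else 0 with hgdef
  have hg : ∀ y ∈ t, z (g y) = y := by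
    intro y hy
    obtain ⟨j, hj⟩ := htsub hy
    have hex : ∃ j, z j = y := ⟨j, hj⟩
    simp only [hgdef, dif_pos hex]
    exact hex.choose_spec
  refine ⟨(fun y => v (g y)) '' t, htfin.image _, ?_⟩
  rintro _ ⟨i, rfl⟩
  have := hcov ⟨i, rfl⟩
  simp only [Set.mem_iUnion] at this
  obtain ⟨y, hy, hdy⟩ := this
  have hdzy : dist (z i) y < δ := hdy
  refine Set.mem_iUnion₂.2 ⟨v (g y), ⟨⟨y, hy, rfl⟩, ?_⟩⟩
  rw [Metric.mem_ball]
  calc dist (v i) (v (g y)) ≤ L * dist (z i) (z (g y)) := h i (g y)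
    _ = L * dist (z i) y := by rw [hg y hy]
    _ ≤ L * δ := by nlinarith [dist_nonneg (x := z i) (y := y)]
    _ < (L + 1) * δ := by nlinarith
    _ = ε := by rw [hδdef]; field_simp [hL1.ne']

/-- The key single-point extension step, via the compact intersection property. -/
lemma step_exists {M X : Type*} [MetricSpace M] [Nonempty M] [CompleteSpace M] [MetricSpace X]
    (hgeo : IsGeodesicSpace M) (hcip : CompactIP M) {L : ℝ} (hL : 0 ≤ L)
    (c₁ c₂ : ℕ → M) (z₁ z₂ : ℕ → X)
    (h11 : ∀ i j, dist (c₁ i) (c₁ j) ≤ L * dist (z₁ i) (z₁ j))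
    (h12 : ∀ i j, dist (c₁ i) (c₂ j) ≤ L * dist (z₁ i) (z₂ j))
    (h22 : ∀ i j, dist (c₂ i) (c₂ j) ≤ L * dist (z₂ i) (z₂ j))
    (htb : TotallyBounded (Set.range c₁ ∪ Set.range c₂)) (x : X) :
    ∃ w : M, (∀ i, dist w (c₁ i) ≤ L * dist x (z₁ i)) ∧
      (∀ i, dist w (c₂ i) ≤ L * dist x (z₂ i)) := by
  classical
  let c : ℕ ⊕ ℕ → M := Sum.elim c₁ c₂
  let z : ℕ ⊕ ℕ → X := Sum.elim z₁ z₂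
  let r : ℕ ⊕ ℕ → ℝ := fun i => L * dist x (z i)
  have hcz : ∀ i j, dist (c i) (c j) ≤ L * dist (z i) (z j) := by
    rintro (i | i) (j | j) <;> simp only [c, z, Sum.elim_inl, Sum.elim_inr]
    · exact h11 i j
    · exact h12 i j
    · rw [dist_comm (c₂ i), dist_comm (z₂ i)]; exact h12 j i
    · exact h22 i j
  have hrnn : ∀ i, 0 ≤ r i := fun i => mul_nonneg hL dist_nonneg
  have hpair : ∀ i j, (closedBall (c i) (r i) ∩ closedBall (c j) (r j)).Nonempty := by
    intro i j
    have hd : dist (c i) (c j) ≤ r i + r j := by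
      calc dist (c i) (c j) ≤ L * dist (z i) (z j) := hcz i j
        _ ≤ L * (dist (z i) x + dist x (z j)) := by
            have := dist_triangle (z i) x (z j)
            nlinarith
        _ = L * dist x (z i) + L * dist x (z j) := by rw [dist_comm (z i) x]; ring
    obtain ⟨w, hw1, hw2⟩ := geodesic_midpoint hgeo (c i) (c j) (r i) (r j)
      (hrnn i) (hrnn j) hd
    exact ⟨w, Metric.mem_closedBall.2 (by rw [dist_comm]; exact hw1),
      Metric.mem_closedBall.2 (by rw [dist_comm]; exact hw2)⟩
  have hrange : Set.range c = Set.range c₁ ∪ Set.range c₂ := Sum.elim_range c₁ c₂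
  have hcompact : IsCompact (closure (Set.range c)) := by
    rw [hrange]
    exact TotallyBounded.isCompact_of_isClosed htb.closure isClosed_closure
  obtain ⟨w, hw⟩ := hcip (ℕ ⊕ ℕ) c r hpair hcompact
  simp only [Set.mem_iInter, Metric.mem_closedBall] at hw
  exact ⟨w, fun i => by simpa [c, z, r] using hw (Sum.inl i),
    fun i => by simpa [c, z, r] using hw (Sum.inr i)⟩

/-- Strong-recursion helper for building a sequence by dependent choice. -/
noncomputable def buildSeq {M : Type*} [Inhabited M] (step : ℕ → (ℕ → M) → M) : ℕ → M
  | n => step n (fun m => if h : m < n then buildSeq step m else default)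
decreasing_by exact h

theorem stmt9 {M X : Type*} [MetricSpace M] [Nonempty M] [CompleteSpace M]
    [MetricSpace X] [CompactSpace X]
    (hgeo : IsGeodesicSpace M) (hcip : CompactIP M)
    (Y : Set X) (f : X → M) (L : ℝ) (hL : 0 ≤ L)
    (hf : ∀ a ∈ Y, ∀ b ∈ Y, dist (f a) (f b) ≤ L * dist a b) :
    ∃ F : X → M, (∀ a ∈ Y, F a = f a) ∧ ∀ a b : X, dist (F a) (F b) ≤ L * dist a b := by
  classical
  cases isEmpty_or_nonempty X with
  | inl hX =>
    exact ⟨f, fun a ha => rfl, fun a b => (hX.elim a)⟩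
  | inr hX =>
  rcases Y.eq_empty_or_nonempty with hY | hY
  · refine ⟨fun _ => Classical.arbitrary M, by simp [hY], fun a b => by
      simp [mul_nonneg hL dist_nonneg]⟩
  haveI : Inhabited M := ⟨Classical.arbitrary M⟩
  haveI : Nonempty Y := hY.to_subtype
  -- dense sequences
  set q : ℕ → X := TopologicalSpace.denseSeq X with hq
  have hqd : DenseRange q := TopologicalSpace.denseRange_denseSeq X
  set py : ℕ → X := fun k => (TopologicalSpace.denseSeq Y k : X) with hpy
  have hpyY : ∀ k, py k ∈ Y := fun k => (TopologicalSpace.denseSeq Y k).2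
  have hpyd : ∀ a ∈ Y, ∀ ε > 0, ∃ k, dist a (py k) < ε := by
    intro a ha ε hε
    have := (Metric.denseRange_iff.1 (TopologicalSpace.denseRange_denseSeq Y)) ⟨a, ha⟩ ε hε
    obtain ⟨k, hk⟩ := this
    exact ⟨k, by rwa [Subtype.dist_eq] at hk⟩
  have htbX : TotallyBounded (univ : Set X) := isCompact_univ.totallyBounded
  have htbq : TotallyBounded (Set.range q) := htbX.subset (Set.subset_univ _)
  have htbpy : TotallyBounded (Set.range py) := htbX.subset (Set.subset_univ _)
  have hfpy : ∀ i j, dist (f (py i)) (f (py j)) ≤ L * dist (py i) (py j) :=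
    fun i j => hf _ (hpyY i) _ (hpyY j)
  have htbf : TotallyBounded (Set.range (fun k => f (py k))) :=
    tb_of_lip hL py _ hfpy htbpy
  -- the recursive step function
  set C : ℕ → (ℕ → M) → M → Prop := fun n prev w =>
    (∀ k, dist w (f (py k)) ≤ L * dist (q n) (py k)) ∧
    (∀ m, m < n → dist w (prev m) ≤ L * dist (q n) (q m)) with hC
  set step : ℕ → (ℕ → M) → M := fun n prev =>
    if h : ∃ w, C n prev w then h.choose else default with hstep
  set u : ℕ → M := buildSeq step with hu
  have hueq : ∀ n, u n = step n (fun m => if h : m < n then u m else default) := by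
    intro n
    rw [hu]
    conv_lhs => rw [buildSeq]
  -- key invariant by strong induction
  have hmain : ∀ n, (∀ k, dist (u n) (f (py k)) ≤ L * dist (q n) (py k)) ∧
      (∀ m, m < n → dist (u n) (u m) ≤ L * dist (q n) (q m)) := by
    intro n
    induction n using Nat.strong_induction_on with
    | _ n ih =>
      -- the existence of a suitable value at stage n
      have hex : ∃ w, C n (fun m => if h : m < n then u m else default) w := by
        -- apply step_exists with c₁ a finite modification, c₂ = f ∘ py
        set c₁ : ℕ → M := fun i => if i < n then u i else f (py 0) with hc₁
        set z₁ : ℕ → X := fun i => if i < n then q i else py 0 with hz₁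
        have h12 : ∀ i j, dist (c₁ i) (c₁ j) ≤ L * dist (z₁ i) (z₁ j) := by
          intro i j
          by_cases hi : i < n <;> by_cases hj : j < n <;>
            simp only [hc₁, hz₁, hi, hj, if_pos, if_neg, if_true, if_false]
          · exact if hij : i = j then by subst hij; simp [mul_nonneg hL dist_nonneg]
              else by
                rcases lt_or_gt_of_ne hij with h | h
                · rw [dist_comm, dist_comm (q i)]; exact (ih j hj).2 i h
                · exact (ih i hi).2 j h
          · exact (ih i hi).1 0
          · rw [dist_comm, dist_comm (py 0)]; exact (ih j hj).1 0
          · simp [mul_nonneg hL dist_nonneg]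
        have h12' : ∀ i j, dist (c₁ i) (f (py j)) ≤ L * dist (z₁ i) (py j) := by
          intro i j
          by_cases hi : i < n <;>
            simp only [hc₁, hz₁, hi, if_pos, if_neg, if_true, if_false]
          · exact (ih i hi).1 j
          · exact hfpy 0 j
        have htb1 : TotallyBounded (Set.range c₁ ∪ Set.range (fun k => f (py k))) := by
          refine TotallyBounded.union ?_ htbf
          have : Set.range c₁ ⊆ insert (f (py 0)) (u '' Set.Iio n) := by
            rintro _ ⟨i, rfl⟩
            by_cases hi : i < n
            · exact Or.inr ⟨i, hi, by simp [hc₁, hi]⟩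
            · exact Or.inl (by simp [hc₁, hi])
          exact (((Set.finite_Iio n).image u).insert _).totallyBounded.subset this
        obtain ⟨w, hw1, hw2⟩ := step_exists hgeo hcip hL c₁ (fun k => f (py k)) z₁ py
          h12 h12' hfpy htb1 (q n)
        refine ⟨w, fun k => hw2 k, fun m hm => ?_⟩
        have := hw1 m
        simp only [hc₁, hz₁, if_pos hm] at this
        simp only [dif_pos hm]
        exact this
      have huv : u n = hex.choose := by
        rw [hueq n, hstep]
        simp only [dif_pos hex]
      have hCu : C n (fun m => if h : m < n then u m else default) (u n) := by
        rw [huv]; exact hex.choose_spec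
      obtain ⟨h1, h2⟩ := hCu
      refine ⟨h1, fun m hm => ?_⟩
      have := h2 m hm
      simpa [hm] using this
  -- full symmetric Lipschitz property for u
  have huu : ∀ n m, dist (u n) (u m) ≤ L * dist (q n) (q m) := by
    intro n m
    rcases lt_trichotomy n m with h | h | h
    · rw [dist_comm, dist_comm (q n)]; exact (hmain m).2 n h
    · subst h; simp [mul_nonneg hL dist_nonneg]
    · exact (hmain n).2 m h
  have hufy : ∀ n k, dist (u n) (f (py k)) ≤ L * dist (q n) (py k) :=
    fun n k => (hmain n).1 k
  have htbu : TotallyBounded (Set.range u) := tb_of_lip hL q u huu htbq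
  have htbuf : TotallyBounded (Set.range u ∪ Set.range (fun k => f (py k))) :=
    htbu.union htbf
  -- for each point x, choose a value
  have hFx : ∀ x : X, ∃ w : M, (∀ n, dist w (u n) ≤ L * dist x (q n)) ∧
      (∀ k, dist w (f (py k)) ≤ L * dist x (py k)) := by
    intro x
    obtain ⟨w, hw1, hw2⟩ := step_exists hgeo hcip hL u (fun k => f (py k)) q py
      huu hufy hfpy htbuf x
    exact ⟨w, hw1, hw2⟩
  set F : X → M := fun x => if hx : x ∈ Y then f x else (hFx x).choose with hF
  -- key property of F at every point
  have hFprop : ∀ x : X, ∀ n, dist (F x) (u n) ≤ L * dist x (q n) := by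
    intro x n
    by_cases hx : x ∈ Y
    · simp only [hF, dif_pos hx]
      -- limit argument via density of py in Y
      refine le_of_forall_pos_le_add ?_
      intro ε' hε'
      have hL1 : (0:ℝ) < 2 * L + 1 := by linarith
      set ε := ε' / (2 * L + 1) with hεdef
      have hε : 0 < ε := div_pos hε' hL1
      obtain ⟨k, hk⟩ := hpyd x hx ε hε
      have h1 : dist (f x) (f (py k)) ≤ L * dist x (py k) := hf _ hx _ (hpyY k)
      have h2 : dist (u n) (f (py k)) ≤ L * dist (q n) (py k) := hufy n k
      have h3 : dist (f x) (u n) ≤ dist (f x) (f (py k)) + dist (f (py k)) (u n) :=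
        dist_triangle _ _ _
      have h4 : dist (q n) (py k) ≤ dist (q n) x + dist x (py k) := dist_triangle _ _ _
      rw [dist_comm (f (py k))] at h3
      have hxq : dist (q n) x = dist x (q n) := dist_comm _ _
      have hεε : (2 * L + 1) * ε = ε' := by rw [hεdef]; field_simp [hL1.ne']
      nlinarith [dist_nonneg (x := x) (y := py k)]
    · simp only [hF, dif_neg hx]
      exact (hFx x).choose_spec.1 n
  refine ⟨F, fun a ha => by simp only [hF, dif_pos ha], fun a b => ?_⟩
  -- final Lipschitz estimate via density of q
  refine le_of_forall_pos_le_add ?_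
  intro ε' hε'
  have hL1 : (0:ℝ) < 4 * L + 1 := by linarith
  set ε := ε' / (4 * L + 1) with hεdef
  have hε : 0 < ε := div_pos hε' hL1
  obtain ⟨n, hn⟩ := (Metric.denseRange_iff.1 hqd) a ε hε
  obtain ⟨m, hm⟩ := (Metric.denseRange_iff.1 hqd) b ε hε
  have h1 : dist (F a) (u n) ≤ L * dist a (q n) := hFprop a n
  have h2 : dist (F b) (u m) ≤ L * dist b (q m) := hFprop b m
  have h3 : dist (u n) (u m) ≤ L * dist (q n) (q m) := huu n m
  have h4 : dist (F a) (F b) ≤ dist (F a) (u n) + dist (u n) (u m) + dist (u m) (F b) :=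
    dist_triangle4 _ _ _ _
  have h5 : dist (q n) (q m) ≤ dist (q n) a + dist a b + dist b (q m) :=
    dist_triangle4 _ _ _ _
  rw [dist_comm (u m)] at h4
  have hna : dist (q n) a = dist a (q n) := dist_comm _ _
  have hbm : dist b (q m) = dist b (q m) := rfl
  have hεε : (4 * L + 1) * ε = ε' := by rw [hεdef]; field_simp [hL1.ne']
  nlinarith [dist_nonneg (x := a) (y := q n), dist_nonneg (x := b) (y := q m)]
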